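/- Let α > 0, β > 0 and λ ∈ ℝ, and let s > 0 satisfy |λ| < s^α. Then the Laplace transform ∫_0^∞ e^{−st} · t^{β−1} · E_{α,β}(λ t^α) dt converges and equals s^{α−β} / (s^α − λ). -/

import Mathlib

open Real Set Filter MeasureTheory

/-- Auxiliary: a pointwise `tsum` of integrable real functions with summable norm-integrals
is integrable. -/
lemma integrable_tsum_real_aux {F : ℕ → ℝ → ℝ} {μ : Measure ℝ} (hF : ∀ i, Integrable (F i) μ)
    (hsum : Summable fun i => ∫ a, ‖F i a‖ ∂μ) :
    Integrable (fun a => ∑' i, F i a) μ := by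
  have hmeas_i : ∀ i, AEMeasurable (fun a => (‖F i a‖₊ : ENNReal)) μ :=
    fun i => (hF i).1.nnnorm.aemeasurable.coe_nnreal_ennreal
  have h0 : ∀ i, ∫⁻ a, (‖F i a‖₊ : ENNReal) ∂μ = ENNReal.ofReal (∫ a, ‖F i a‖ ∂μ) := fun i => by
    exact (MeasureTheory.ofReal_integral_norm_eq_lintegral_enorm (hF i)).symm
  have key : ∑' i, ∫⁻ a, (‖F i a‖₊ : ENNReal) ∂μ ≠ ⊤ := by
    simp_rw [h0]
    rw [← ENNReal.ofReal_tsum_of_nonneg (fun i => integral_nonneg fun a => norm_nonneg _) hsum]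
    exact ENNReal.ofReal_ne_top
  have hae : ∀ᵐ a ∂μ, Summable fun i => ‖F i a‖ := by
    rw [← lintegral_tsum hmeas_i] at key
    refine (ae_lt_top' (AEMeasurable.ennreal_tsum hmeas_i) key).mono fun x hx => ?_
    have := ENNReal.tsum_coe_ne_top_iff_summable_coe.mp hx.ne
    simpa [coe_nnnorm] using this
  have hmeas : AEStronglyMeasurable (fun a => ∑' i, F i a) μ := by
    refine aestronglyMeasurable_of_tendsto_ae atTop
      (f := fun n a => ∑ i ∈ Finset.range n, F i a)
      (fun n => Finset.aestronglyMeasurable_fun_sum _ fun i _ => (hF i).1) ?_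
    filter_upwards [hae] with x hx
    exact hx.of_norm.hasSum.tendsto_sum_nat
  refine ⟨hmeas, ?_⟩
  show (∫⁻ a, ‖∑' i, F i a‖₊ ∂μ) < ⊤
  calc ∫⁻ a, (‖∑' i, F i a‖₊ : ENNReal) ∂μ
      ≤ ∫⁻ a, ∑' i, (‖F i a‖₊ : ENNReal) ∂μ := by
        refine lintegral_mono_ae ?_
        filter_upwards [hae] with x hx
        have hx' : Summable fun i => ‖F i x‖₊ := by
          rw [← NNReal.summable_coe]; simpa [coe_nnnorm] using hx
        calc (‖∑' i, F i x‖₊ : ENNReal) ≤ ((∑' i, ‖F i x‖₊ : NNReal) : ENNReal) :=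
              ENNReal.coe_le_coe.mpr (nnnorm_tsum_le hx')
          _ = ∑' i, (‖F i x‖₊ : ENNReal) := ENNReal.coe_tsum hx'
    _ = ∑' i, ∫⁻ a, (‖F i a‖₊ : ENNReal) ∂μ := lintegral_tsum hmeas_i
    _ < ⊤ := key.lt_top

/-- The generalized Mittag-Leffler function
`E_{a,b}^r(x)` given by the series sum over k of Gamma(r+k)/(Gamma(r)*Gamma(a*k+b)) * x^k/k!
(real argument). Poles of Gamma are handled by the entire reciprocal Gamma function:
in Mathlib, `Real.Gamma` vanishes at nonpositive integers and division by zero is zero. -/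
noncomputable def mlf (a b r : ℝ) (x : ℝ) : ℝ :=
  ∑' k : ℕ, Real.Gamma (r + k) / (Real.Gamma r * Real.Gamma (a * k + b)) * x ^ k /
    (Nat.factorial k : ℝ)

/-- for a > 0, b > 0, lam real and s > 0 with |lam| < s^a, the Laplace
transform of t^(b-1) * E_{a,b}(lam*t^a) converges and equals s^(a-b) / (s^a - lam). -/
theorem laplace_mlf (a b lam s : ℝ) (ha : 0 < a) (hb : 0 < b) (hs : 0 < s)
    (hlam : |lam| < s ^ a) :
    IntegrableOn (fun t : ℝ => Real.exp (-(s * t)) * t ^ (b - 1) * mlf a b 1 (lam * t ^ a))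
      (Ioi 0) ∧
    ∫ t in Ioi (0 : ℝ), Real.exp (-(s * t)) * t ^ (b - 1) * mlf a b 1 (lam * t ^ a) =
      s ^ (a - b) / (s ^ a - lam) := by
  set F : ℕ → ℝ → ℝ :=
    fun k t => lam ^ k / Real.Gamma (a * k + b) * (t ^ (a * k + b - 1) * Real.exp (-(s * t)))
    with hFdef
  have hpos : ∀ k : ℕ, 0 < a * k + b := fun k => by positivity
  -- integrability of each term
  have h1 : ∀ k : ℕ, IntegrableOn (F k) (Ioi 0) := by
    intro k
    have := integrableOn_rpow_mul_exp_neg_mul_rpow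
      (s := a * k + b - 1) (p := 1) (b := s) (by linarith [hpos k]) one_pos hs
    refine IntegrableOn.congr_fun (this.const_mul (lam ^ k / Real.Gamma (a * k + b)))
      (fun t ht => ?_) measurableSet_Ioi
    simp [hFdef, Real.rpow_one, neg_mul]
  -- the value of each integral
  have h2 : ∀ k : ℕ, ∫ t in Ioi (0:ℝ), F k t = lam ^ k * (1 / s) ^ (a * k + b) := by
    intro k
    rw [hFdef]
    simp only
    rw [MeasureTheory.integral_const_mul, integral_rpow_mul_exp_neg_mul_Ioi (hpos k) hs,
      mul_comm ((1/s) ^ (a * (k:ℝ) + b)), div_mul_eq_mul_div, mul_comm (Real.Gamma _),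
      mul_div_assoc, mul_div_assoc, div_self (Real.Gamma_pos_of_pos (hpos k)).ne', mul_one]
  -- the value of each norm-integral
  have h3 : ∀ k : ℕ, ∫ t in Ioi (0:ℝ), ‖F k t‖ = |lam| ^ k * (1 / s) ^ (a * k + b) := by
    intro k
    have heq : ∀ t ∈ Ioi (0:ℝ), ‖F k t‖ =
        |lam| ^ k / Real.Gamma (a * k + b) * (t ^ (a * k + b - 1) * Real.exp (-(s * t))) := by
      intro t ht
      rw [hFdef]
      simp only [Real.norm_eq_abs, abs_mul, abs_div, abs_pow]
      rw [abs_of_pos (Real.Gamma_pos_of_pos (hpos k)),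
        abs_of_pos (Real.rpow_pos_of_pos ht _), abs_of_pos (Real.exp_pos _)]
    rw [setIntegral_congr_fun measurableSet_Ioi heq, MeasureTheory.integral_const_mul,
      integral_rpow_mul_exp_neg_mul_Ioi (hpos k) hs,
      mul_comm ((1/s) ^ (a * (k:ℝ) + b)), div_mul_eq_mul_div, mul_comm (Real.Gamma _),
      mul_div_assoc, mul_div_assoc, div_self (Real.Gamma_pos_of_pos (hpos k)).ne', mul_one]
  -- exponent splitting
  have hexp : ∀ k : ℕ, (1 / s : ℝ) ^ (a * k + b) = ((1/s) ^ a) ^ k * (1/s) ^ b := by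
    intro k
    rw [Real.rpow_add (by positivity), ← Real.rpow_natCast ((1/s) ^ a) k,
      ← Real.rpow_mul (by positivity)]
  have hsa : (0:ℝ) < s ^ a := Real.rpow_pos_of_pos hs a
  have hratio : |lam| * (1 / s) ^ a < 1 := by
    rw [one_div, Real.inv_rpow hs.le, ← div_eq_mul_inv]
    exact (div_lt_one hsa).mpr hlam
  have hsum : Summable fun k : ℕ => |lam| ^ k * (1 / s) ^ (a * k + b) := by
    have : Summable fun k : ℕ => (|lam| * (1/s) ^ a) ^ k * (1/s) ^ b :=
      (summable_geometric_of_lt_one (by positivity) hratio).mul_right _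
    refine this.congr fun k => ?_
    rw [hexp k, mul_pow, mul_assoc]
  -- value of the final sum
  have hval : ∑' k : ℕ, lam ^ k * (1 / s) ^ (a * k + b) = s ^ (a - b) / (s ^ a - lam) := by
    have hnorm : ‖lam / s ^ a‖ < 1 := by
      rw [Real.norm_eq_abs, abs_div, abs_of_pos hsa]
      exact (div_lt_one hsa).mpr hlam
    calc ∑' k : ℕ, lam ^ k * (1 / s) ^ (a * k + b)
        = ∑' k : ℕ, (lam / s ^ a) ^ k * (1/s) ^ b := by
          refine tsum_congr fun k => ?_
          rw [hexp k, div_pow, one_div, Real.inv_rpow hs.le, ← mul_assoc, inv_pow,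
            div_eq_mul_inv]
      _ = (1 - lam / s ^ a)⁻¹ * (1/s) ^ b := by
          rw [tsum_mul_right, tsum_geometric_of_norm_lt_one hnorm]
      _ = s ^ (a - b) / (s ^ a - lam) := by
          have hne : s ^ a - lam ≠ 0 := (sub_pos.mpr ((le_abs_self lam).trans_lt hlam)).ne'
          have hone : (1:ℝ) - lam / s ^ a = (s ^ a - lam) / s ^ a := by field_simp
          rw [one_div, Real.inv_rpow hs.le, Real.rpow_sub hs, hone, inv_div,
            div_mul_eq_mul_div, ← div_eq_mul_inv]
  -- pointwise identity on Ioi 0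
  have hpt : ∀ t ∈ Ioi (0:ℝ), Real.exp (-(s*t)) * t ^ (b-1) * mlf a b 1 (lam * t^a)
      = ∑' k : ℕ, F k t := by
    intro t ht
    have ht0 : (0:ℝ) < t := ht
    have hml : mlf a b 1 (lam * t^a) = ∑' k : ℕ, (lam * t^a)^k / Real.Gamma (a*k+b) := by
      unfold mlf
      refine tsum_congr fun k => ?_
      have hk : ((Nat.factorial k : ℝ)) ≠ 0 := Nat.cast_ne_zero.mpr (Nat.factorial_ne_zero k)
      rw [Real.Gamma_one, one_mul, show (1:ℝ) + k = (k:ℝ) + 1 by ring,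
        Real.Gamma_nat_eq_factorial]
      field_simp
    rw [hml, ← tsum_mul_left]
    refine tsum_congr fun k => ?_
    have ht' : t ^ (a * k + b - 1) = t ^ (b-1) * (t^a)^k := by
      rw [← Real.rpow_natCast (t^a) k, ← Real.rpow_mul ht0.le, ← Real.rpow_add ht0]
      ring_nf
    rw [hFdef]
    simp only
    rw [ht', mul_pow]
    ring
  -- the norm-integral summability in the right form
  have hsum' : Summable fun k : ℕ => ∫ t in Ioi (0:ℝ), ‖F k t‖ :=
    hsum.congr fun k => (h3 k).symm
  -- integrability of the tsum
  have hInt : IntegrableOn (fun t => ∑' k : ℕ, F k t) (Ioi 0) :=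
    integrable_tsum_real_aux (fun k => h1 k) hsum'
  constructor
  · exact hInt.congr_fun (fun t ht => (hpt t ht).symm) measurableSet_Ioi
  · rw [setIntegral_congr_fun measurableSet_Ioi hpt,
      ← integral_tsum_of_summable_integral_norm (fun k => h1 k) hsum']
    rw [tsum_congr h2]
    exact hval
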